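/- Let x* minimize ∑ᵢ αᵢ fᵢ(x) over the convex set C = {x : A x = b, H x ≤ g, fᵢ(x) ≤ rᵢ for all i}, where each fᵢ is convex and differentiable, αᵢ > 0, and Slater's condition holds. Then there exist weights ᾱᵢ > 0 such that x* also minimizes ∑ᵢ ᾱᵢ fᵢ(x) over {x : A x = b, H x ≤ g}. Specifically, ᾱᵢ = αᵢ + λᵢ* where λᵢ* ≥ 0 are the KKT multipliers of the constraints fᵢ(x) ≤ rᵢ. -/

import Mathlib

open Matrix

private lemma combo_lt {a b u v u' v' : ℝ} (ha : 0 ≤ a) (hb : 0 ≤ b) (hab : a + b = 1)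
    (h1 : u < u') (h2 : v < v') : a * u + b * v < a * u' + b * v' := by
  rcases eq_or_lt_of_le ha with h | h
  · have hb1 : b = 1 := by linarith
    simp [← h, hb1, h2]
  · have : a * u < a * u' := by exact (mul_lt_mul_iff_right₀ h).2 h1
    have : b * v ≤ b * v' := mul_le_mul_of_nonneg_left h2.le hb
    nlinarith [(mul_lt_mul_iff_right₀ h).2 h1]

/-- If x* minimizes the scalarized objective over the set with extra objective-value
constraints (Slater's condition holding), then there are strictly positive weights ᾱ
for which x* minimizes the re-scalarized objective over the relaxed set. -/
theorem scalarization_constraint_removal {n M p q : ℕ}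
    (f : Fin M → (Fin n → ℝ) → ℝ)
    (hconv : ∀ i, ConvexOn ℝ Set.univ (f i))
    (hdiff : ∀ i, Differentiable ℝ (f i))
    (A : Matrix (Fin p) (Fin n) ℝ) (b : Fin p → ℝ)
    (H : Matrix (Fin q) (Fin n) ℝ) (g : Fin q → ℝ)
    (r : Fin M → ℝ) (α : Fin M → ℝ) (hα : ∀ i, 0 < α i)
    -- Slater's condition
    (hslater : ∃ x : Fin n → ℝ, A.mulVec x = b ∧ (∀ j, H.mulVec x j < g j) ∧
      ∀ i, f i x < r i)
    (xstar : Fin n → ℝ)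
    (hfeas : A.mulVec xstar = b ∧ (∀ j, H.mulVec xstar j ≤ g j) ∧ ∀ i, f i xstar ≤ r i)
    (hmin : ∀ x : Fin n → ℝ, A.mulVec x = b → (∀ j, H.mulVec x j ≤ g j) →
      (∀ i, f i x ≤ r i) → ∑ i, α i * f i xstar ≤ ∑ i, α i * f i x) :
    ∃ αbar : Fin M → ℝ, (∀ i, 0 < αbar i) ∧ (∃ lam : Fin M → ℝ, (∀ i, 0 ≤ lam i) ∧
      ∀ i, αbar i = α i + lam i) ∧
      ∀ x : Fin n → ℝ, A.mulVec x = b → (∀ j, H.mulVec x j ≤ g j) →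
        ∑ i, αbar i * f i xstar ≤ ∑ i, αbar i * f i x := by
  classical
  obtain ⟨x0, hx0A, hx0H, hx0f⟩ := hslater
  obtain ⟨hxA, hxH, hxf⟩ := hfeas
  set F : (Fin n → ℝ) → ℝ := fun x => ∑ i, α i * f i x with hF
  set S : Set ((Fin M → ℝ) × ℝ) :=
    {u | ∃ x, A.mulVec x = b ∧ (∀ j, H.mulVec x j ≤ g j) ∧
      (∀ i, f i x - r i < u.1 i) ∧ F x < u.2} with hS
  -- convexity of S
  have hSconv : Convex ℝ S := by
    rintro ⟨u, t⟩ ⟨x, hxA', hxH', hxu, hxt⟩ ⟨u', t'⟩ ⟨y, hyA, hyH, hyu, hyt⟩ a a' ha ha' haa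
    dsimp only at hxu hxt hyu hyt
    refine ⟨a • x + a' • y, ?_, ?_, ?_, ?_⟩
    · rw [Matrix.mulVec_add, Matrix.mulVec_smul, Matrix.mulVec_smul, hxA', hyA,
        ← add_smul, haa, one_smul]
    · intro j
      have : H.mulVec (a • x + a' • y) j = a * H.mulVec x j + a' * H.mulVec y j := by
        rw [Matrix.mulVec_add, Matrix.mulVec_smul, Matrix.mulVec_smul]
        simp [smul_eq_mul]
      rw [this]
      calc a * H.mulVec x j + a' * H.mulVec y j
          ≤ a * g j + a' * g j := by
            gcongr <;> [exact hxH' j; exact hyH j]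
        _ = g j := by rw [← add_mul, haa, one_mul]
    · intro i
      have hf := (hconv i).2 (Set.mem_univ x) (Set.mem_univ y) ha ha' haa
      simp only [smul_eq_mul] at hf
      have := combo_lt ha ha' haa (hxu i) (hyu i)
      simp only [Prod.fst_add, Prod.smul_fst, Pi.add_apply, Pi.smul_apply, smul_eq_mul]
      calc f i (a • x + a' • y) - r i
          ≤ a * f i x + a' * f i y - r i := by linarith
        _ = a * (f i x - r i) + a' * (f i y - r i) + (a + a' - 1) * r i := by ring
        _ = a * (f i x - r i) + a' * (f i y - r i) := by rw [haa]; ring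
        _ < a * u i + a' * u' i := this
    · have hFc : F (a • x + a' • y) ≤ a * F x + a' * F y := by
        rw [hF]
        simp only
        rw [Finset.mul_sum, Finset.mul_sum, ← Finset.sum_add_distrib]
        refine Finset.sum_le_sum fun i _ => ?_
        have hf := (hconv i).2 (Set.mem_univ x) (Set.mem_univ y) ha ha' haa
        simp only [smul_eq_mul] at hf
        nlinarith [(hα i).le, hf, mul_le_mul_of_nonneg_left hf (hα i).le]
      have := combo_lt ha ha' haa hxt hyt
      simp only [Prod.snd_add, Prod.smul_snd, smul_eq_mul]
      calc F (a • x + a' • y) ≤ a * F x + a' * F y := hFc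
        _ < a * t + a' * t' := combo_lt ha ha' haa hxt hyt
  -- openness of S
  have hSopen : IsOpen S := by
    have : S = ⋃ x : Fin n → ℝ, ⋃ (_ : A.mulVec x = b ∧ ∀ j, H.mulVec x j ≤ g j),
        ((Set.univ.pi fun i => Set.Ioi (f i x - r i)) ×ˢ Set.Ioi (F x)) := by
      ext ⟨u, t⟩
      simp only [hS, Set.mem_setOf_eq, Set.mem_iUnion, Set.mem_prod, Set.mem_pi,
        Set.mem_univ, forall_true_left, Set.mem_Ioi, true_implies]
      constructor
      · rintro ⟨x, h1, h2, h3, h4⟩; exact ⟨x, ⟨h1, h2⟩, h3, h4⟩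
      · rintro ⟨x, ⟨h1, h2⟩, h3, h4⟩; exact ⟨x, h1, h2, h3, h4⟩
    rw [this]
    refine isOpen_iUnion fun x => isOpen_iUnion fun _ => ?_
    exact ((isOpen_set_pi Set.finite_univ fun _ _ => isOpen_Ioi).prod isOpen_Ioi)
  -- the point to separate
  have hznot : (((0 : Fin M → ℝ), F xstar) : (Fin M → ℝ) × ℝ) ∉ S := by
    rintro ⟨x, h1, h2, h3, h4⟩
    have hfr : ∀ i, f i x ≤ r i := by
      intro i; have := h3 i; simp at this; linarith
    exact absurd h4 (not_lt.2 (hmin x h1 h2 hfr))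
  obtain ⟨φ, hφ⟩ := geometric_hahn_banach_open_point hSconv hSopen hznot
  -- coordinate expansion of φ
  set c : Fin M → ℝ := fun i => φ ((Pi.single i 1 : Fin M → ℝ), (0 : ℝ)) with hc
  set c0 : ℝ := φ ((0 : Fin M → ℝ), (1 : ℝ)) with hc0
  have hexp : ∀ (u : Fin M → ℝ) (t : ℝ),
      φ (u, t) = (∑ i, u i * c i) + t * c0 := by
    intro u t
    have h1 : ((u, t) : (Fin M → ℝ) × ℝ)
        = (∑ i : Fin M, (u i) • ((Pi.single i (1:ℝ) : Fin M → ℝ), (0:ℝ)))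
          + t • (((0 : Fin M → ℝ), (1:ℝ))) := by
      refine Prod.ext ?_ ?_
      · simp only [Prod.fst_sum, Prod.fst_add, Prod.smul_fst]
        rw [show (∑ i : Fin M, (u i) • (Pi.single i (1:ℝ) : Fin M → ℝ))
            = ∑ i : Fin M, (Pi.single i (u i) : Fin M → ℝ) from ?_]
        · rw [Finset.univ_sum_single u]; simp
        · refine Finset.sum_congr rfl fun i _ => ?_
          rw [← Pi.single_smul, smul_eq_mul, mul_one]
      · simp [Prod.snd_sum]
    rw [h1, map_add, map_sum, _root_.map_smul, smul_eq_mul]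
    congr 1
    refine Finset.sum_congr rfl fun i _ => ?_
    rw [_root_.map_smul, smul_eq_mul]
  have hφz : φ (((0 : Fin M → ℝ), F xstar)) = F xstar * c0 := by
    rw [hexp]; simp
  -- membership helper
  have hmem : ∀ (x : Fin n → ℝ), A.mulVec x = b → (∀ j, H.mulVec x j ≤ g j) →
      ∀ (u : Fin M → ℝ) (t : ℝ), (∀ i, f i x - r i < u i) → F x < t → ((u, t) : (Fin M → ℝ) × ℝ) ∈ S :=
    fun x h1 h2 u t h3 h4 => ⟨x, h1, h2, h3, h4⟩
  -- base point in S
  have hbase : ∀ s : ℝ, 0 ≤ s → ∀ i : Fin M,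
      (((fun j => f j xstar - r j + 1) + s • (Pi.single i 1 : Fin M → ℝ), F xstar + 1)
        : (Fin M → ℝ) × ℝ) ∈ S := by
    intro s hs i
    refine hmem xstar hxA hxH _ _ (fun j => ?_) (by linarith)
    have h1 : (0:ℝ) ≤ s * (Pi.single i 1 : Fin M → ℝ) j := by
      refine mul_nonneg hs ?_
      rcases eq_or_ne j i with h | h <;> simp [Pi.single_apply, h]
    simp only [Pi.add_apply, Pi.smul_apply, smul_eq_mul]
    linarith
  -- each c i ≤ 0
  have hci : ∀ i, c i ≤ 0 := by
    intro i
    by_contra h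
    push_neg at h
    set a : (Fin M → ℝ) × ℝ := ((fun j => f j xstar - r j + 1), F xstar + 1) with ha
    have haS : ∀ s : ℝ, 0 ≤ s → φ a + s * c i < F xstar * c0 := by
      intro s hs
      have := hφ _ (hbase s hs i)
      rw [hφz] at this
      have heq : φ ((fun j => f j xstar - r j + 1) + s • (Pi.single i 1 : Fin M → ℝ),
          F xstar + 1) = φ a + s * c i := by
        have : (((fun j => f j xstar - r j + 1) + s • (Pi.single i 1 : Fin M → ℝ),
            F xstar + 1) : (Fin M → ℝ) × ℝ)
            = a + s • ((Pi.single i 1 : Fin M → ℝ), (0:ℝ)) := by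
          refine Prod.ext ?_ ?_ <;> simp [ha]
        rw [this, map_add, _root_.map_smul, smul_eq_mul]
      rw [heq] at this
      exact this
    have h1 := haS (max 0 ((F xstar * c0 - φ a) / c i)) (le_max_left _ _)
    have h2 : (F xstar * c0 - φ a) / c i ≤ max 0 ((F xstar * c0 - φ a) / c i) :=
      le_max_right _ _
    have h3 : F xstar * c0 - φ a ≤ max 0 ((F xstar * c0 - φ a) / c i) * c i := by
      rw [div_le_iff₀ h] at h2
      linarith
    linarith
  -- c0 ≤ 0
  have hc0le : c0 ≤ 0 := by
    by_contra h
    push_neg at h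
    have haS : ∀ s : ℝ, 0 ≤ s →
        φ ((fun j => f j xstar - r j + 1), F xstar + 1) + s * c0 < F xstar * c0 := by
      intro s hs
      have hmem' : (((fun j => f j xstar - r j + 1), F xstar + 1 + s) : (Fin M → ℝ) × ℝ) ∈ S :=
        hmem xstar hxA hxH _ _ (fun j => by simp) (by linarith)
      have := hφ _ hmem'
      rw [hφz] at this
      have heq : (((fun j => f j xstar - r j + 1), F xstar + 1 + s) : (Fin M → ℝ) × ℝ)
          = ((fun j => f j xstar - r j + 1), F xstar + 1) + s • (((0 : Fin M → ℝ), (1:ℝ))) := by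
        refine Prod.ext ?_ ?_ <;> simp
      rw [heq, map_add, _root_.map_smul, smul_eq_mul] at this
      exact this
    set a := φ ((fun j => f j xstar - r j + 1), F xstar + 1)
    have h1 := haS (max 0 ((F xstar * c0 - a) / c0)) (le_max_left _ _)
    have h2 : (F xstar * c0 - a) / c0 ≤ max 0 ((F xstar * c0 - a) / c0) := le_max_right _ _
    have h3 : F xstar * c0 - a ≤ max 0 ((F xstar * c0 - a) / c0) * c0 := by
      rw [div_le_iff₀ h] at h2
      linarith
    linarith
  -- strict: c0 < 0, using the Slater point
  have hc0lt : c0 < 0 := by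
    rcases lt_or_eq_of_le hc0le with h | h
    · exact h
    · exfalso
      have hmem0 : (((fun i => (f i x0 - r i)/2), F x0 + 1) : (Fin M → ℝ) × ℝ) ∈ S := by
        refine hmem x0 hx0A (fun j => (hx0H j).le) _ _ (fun i => ?_) (by linarith)
        have := hx0f i
        linarith
      have h1 := hφ _ hmem0
      rw [hφz, hexp] at h1
      have h2 : (0:ℝ) ≤ ∑ i, (f i x0 - r i)/2 * c i := by
        refine Finset.sum_nonneg fun i _ => ?_
        have h3 : (f i x0 - r i)/2 ≤ 0 := by have := hx0f i; linarith
        nlinarith [hci i]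
      rw [h] at h1
      simp only [mul_zero] at h1
      linarith
  -- key Lagrangian inequality
  have key : ∀ x : Fin n → ℝ, A.mulVec x = b → (∀ j, H.mulVec x j ≤ g j) →
      (∑ i, (f i x - r i) * c i) + F x * c0 ≤ F xstar * c0 := by
    intro x h1 h2
    by_contra hcon
    push_neg at hcon
    set L := (∑ i, (f i x - r i) * c i) + F x * c0 with hL
    set K := (∑ i, c i) + c0 with hK
    have hKneg : K < 0 := by
      have : (∑ i, c i) ≤ 0 := Finset.sum_nonpos fun i _ => hci i
      rw [hK]; linarith
    set ε := (F xstar * c0 - L) / K with hε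
    have hεpos : 0 < ε := by
      apply div_pos_of_neg_of_neg _ hKneg
      linarith
    have hmemε : (((fun i => f i x - r i + ε), F x + ε) : (Fin M → ℝ) × ℝ) ∈ S :=
      hmem x h1 h2 _ _ (fun i => by simp [hεpos]) (by linarith)
    have h3 := hφ _ hmemε
    rw [hφz, hexp] at h3
    have h4 : (∑ i, (f i x - r i + ε) * c i) + (F x + ε) * c0 = L + ε * K := by
      rw [hL, hK]
      simp only [add_mul, Finset.sum_add_distrib, ← Finset.mul_sum]
      ring
    rw [h4] at h3
    have h5 : ε * K = F xstar * c0 - L := by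
      rw [hε, div_mul_cancel₀]
      exact ne_of_lt hKneg
    rw [h5] at h3
    linarith
  -- assemble the answer
  have hlam : ∀ i, 0 ≤ c i / c0 := by
    intro i
    rw [div_nonneg_iff]
    right
    exact ⟨hci i, hc0le⟩
  refine ⟨fun i => α i + c i / c0, fun i => add_pos_of_pos_of_nonneg (hα i) (hlam i),
    ⟨fun i => c i / c0, hlam, fun i => rfl⟩, ?_⟩
  intro x h1 h2
  have hc0ne : c0 ≠ 0 := ne_of_lt hc0lt
  rw [← mul_le_mul_iff_right₀ (show (0:ℝ) < -c0 by linarith)]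
  have expand : ∀ y : Fin n → ℝ,
      (-c0) * ∑ i, (α i + c i / c0) * f i y
        = (-c0) * (∑ i, α i * f i y) + ∑ i, (-(c i)) * f i y := by
    intro y
    rw [Finset.mul_sum, Finset.mul_sum, ← Finset.sum_add_distrib]
    refine Finset.sum_congr rfl fun i _ => ?_
    field_simp
    ring
  rw [expand, expand]
  have hkey := key x h1 h2
  rw [hF] at hkey
  simp only at hkey
  simp only [sub_mul, Finset.sum_sub_distrib] at hkey
  have hA1 : ∑ i, (-(c i)) * f i xstar ≤ ∑ i, (-(c i)) * r i := by
    refine Finset.sum_le_sum fun i _ => ?_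
    exact mul_le_mul_of_nonneg_left (hxf i) (by linarith [hci i])
  have hE1 : ∑ i, (-(c i)) * f i x = -∑ i, f i x * c i := by
    rw [← Finset.sum_neg_distrib]
    exact Finset.sum_congr rfl fun i _ => by ring
  have hE2 : ∑ i, (-(c i)) * r i = -∑ i, r i * c i := by
    rw [← Finset.sum_neg_distrib]
    exact Finset.sum_congr rfl fun i _ => by ring
  linarith [hkey, hA1, hE1.le, hE1.ge, hE2.le, hE2.ge]
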